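/- Let p be a prime and r, s, n positive integers. Then c_{p^r}^s(n) = p^{sr} - p^{s(r-1)} if p^{sr} | n; c_{p^r}^s(n) = -p^{s(r-1)} if p^{s(r-1)} | n but p^{sr} ∤ n; and c_{p^r}^s(n) = 0 if p^{s(r-1)} ∤ n. -/

import Mathlib

open Finset Filter

/-- The generalized GCD `(m, n)_s`: the largest positive integer of the form `l ^ s`
dividing both `m` and `n`. -/
noncomputable def genGcd (s m n : ℕ) : ℕ :=
  letI := Classical.dec
  ((Nat.gcd m n).divisors.filter fun d => ∃ l : ℕ, l ^ s = d).sup id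

/-- The Cohen–Ramanujan sum `c_r^s(n) = ∑_{h=1, (h, r^s)_s = 1}^{r^s} e^{2πinh/r^s}`. -/
noncomputable def cohenRamanujanSum (s r n : ℕ) : ℂ :=
  ∑ h ∈ Finset.Icc 1 (r ^ s),
    if genGcd s h (r ^ s) = 1 then
      Complex.exp (2 * Real.pi * Complex.I * n * h / (r ^ s)) else 0

/-- The Jordan totient function `J_a(n) = n^a ∏_{p ∣ n, p prime} (1 - 1/p^a)`,
with arbitrary real exponent `a`. -/
noncomputable def jordanTotient (a : ℝ) (n : ℕ) : ℝ :=
  (n : ℝ) ^ a * ∏ p ∈ n.primeFactors, (1 - 1 / (p : ℝ) ^ a)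

/-- `tauPow k n` is the number of positive integers of the form `l ^ k` dividing `n`. -/
noncomputable def tauPow (k n : ℕ) : ℕ :=
  letI := Classical.dec
  (n.divisors.filter fun d => ∃ l : ℕ, l ^ k = d).card

/-- The Riemann zeta function of a real argument `s > 1`, as `∑_{n ≥ 1} 1/n^s`. -/
noncomputable def realZeta (s : ℝ) : ℝ := ∑' n : ℕ, 1 / (n : ℝ) ^ s

lemma sum_exp_Icc (M n : ℕ) (hM : 0 < M) :
    ∑ h ∈ Finset.Icc 1 M, Complex.exp (2 * Real.pi * Complex.I * n * h / M)
      = if M ∣ n then (M : ℂ) else 0 := by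
  have hM0 : (M : ℂ) ≠ 0 := Nat.cast_ne_zero.2 hM.ne'
  set z : ℂ := Complex.exp (2 * Real.pi * Complex.I * n / M) with hz
  have hzh : ∀ h : ℕ, Complex.exp (2 * Real.pi * Complex.I * ↑n * ↑h / ↑M) = z ^ h := by
    intro h
    rw [hz, ← Complex.exp_nat_mul]
    congr 1
    ring
  simp only [hzh]
  by_cases hd : M ∣ n
  · obtain ⟨k, rfl⟩ := hd
    have hz1 : z = 1 := by
      rw [hz]
      have : (2 * ↑Real.pi * Complex.I * ↑(M * k) / ↑M) = (k : ℤ) * (2 * Real.pi * Complex.I) := by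
        push_cast
        field_simp
      rw [this, Complex.exp_int_mul_two_pi_mul_I]
    simp [hz1, Nat.card_Icc]
  · rw [if_neg hd]
    have hz1 : z ≠ 1 := by
      intro h1
      rw [hz, Complex.exp_eq_one_iff] at h1
      obtain ⟨k, hk⟩ := h1
      have hπ : (2 * (Real.pi : ℂ) * Complex.I) ≠ 0 := by
        simp [Real.pi_ne_zero, Complex.I_ne_zero]
      have h2 : (n : ℂ) = k * M := by
        field_simp at hk
        have : (2 * (Real.pi:ℂ) * Complex.I) * n = (2 * (Real.pi:ℂ) * Complex.I) * (k * M) := by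
          rw [hk]; ring
        exact mul_left_cancel₀ hπ this
      have h3 : (n : ℤ) = k * M := by exact_mod_cast h2
      apply hd
      have : (M : ℤ) ∣ (n : ℤ) := ⟨k, by rw [h3, mul_comm]⟩
      exact_mod_cast this
    have hzM : z ^ M = 1 := by
      rw [← hzh M]
      have : 2 * ↑Real.pi * Complex.I * ↑n * ↑M / ↑M = (n : ℤ) * (2 * Real.pi * Complex.I) := by
        push_cast
        field_simp
      rw [this, Complex.exp_int_mul_two_pi_mul_I]
    have h1 : ∑ h ∈ Finset.Icc 1 M, z ^ h = z * ∑ i ∈ Finset.range M, z ^ i := by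
      rw [← Finset.Ico_add_one_right_eq_Icc, Finset.sum_Ico_eq_sum_range, Finset.mul_sum]
      simp [pow_add, pow_succ, mul_comm]
    rw [h1, geom_sum_eq hz1, hzM]
    simp

lemma genGcd_eq_one_iff (p s r h : ℕ) (hp : p.Prime) (hh : 0 < h) (hs : 0 < s) (hr : 0 < r) :
    genGcd s h ((p ^ r) ^ s) = 1 ↔ ¬ p ^ s ∣ h := by
  classical
  have hg0 : Nat.gcd h ((p ^ r) ^ s) ≠ 0 := by
    intro hc
    exact hh.ne' (Nat.eq_zero_of_gcd_eq_zero_left hc)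
  constructor
  · intro h1 hdvd
    have hps : p ^ s ∣ (p ^ r) ^ s := by
      rw [← pow_mul]
      exact pow_dvd_pow p (Nat.le_mul_of_pos_left s hr)
    have hmem : p ^ s ∈ ((Nat.gcd h ((p ^ r) ^ s)).divisors.filter fun d => ∃ l : ℕ, l ^ s = d) := by
      rw [Finset.mem_filter, Nat.mem_divisors]
      exact ⟨⟨Nat.dvd_gcd hdvd hps, hg0⟩, ⟨p, rfl⟩⟩
    have hle : p ^ s ≤ genGcd s h ((p ^ r) ^ s) := by
      have := Finset.le_sup (f := id) hmem
      unfold genGcd; exact this.trans_eq (congrArg (Finset.sup · id) (by convert rfl))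
    have : 2 ≤ p ^ s := by
      calc 2 ≤ p := hp.two_le
      _ = p ^ 1 := (pow_one p).symm
      _ ≤ p ^ s := Nat.pow_le_pow_right hp.pos hs
    omega
  · intro hnd
    have hset : ((Nat.gcd h ((p ^ r) ^ s)).divisors.filter fun d => ∃ l : ℕ, l ^ s = d) = {1} := by
      apply Finset.eq_singleton_iff_unique_mem.2
      constructor
      · rw [Finset.mem_filter, Nat.mem_divisors]
        exact ⟨⟨one_dvd _, hg0⟩, ⟨1, one_pow s⟩⟩
      · intro d hd
        rw [Finset.mem_filter, Nat.mem_divisors] at hd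
        obtain ⟨⟨hddvd, _⟩, l, rfl⟩ := hd
        have hlp : l ∣ p ^ (r * s) := by
          have : l ^ s ∣ (p ^ r) ^ s := hddvd.trans (Nat.gcd_dvd_right _ _)
          rw [← pow_mul] at this
          exact (dvd_pow_self l hs.ne').trans this
        obtain ⟨j, hj, rfl⟩ := (Nat.dvd_prime_pow hp).1 hlp
        rcases Nat.eq_zero_or_pos j with hj0 | hj0
        · subst hj0; simp
        · exfalso
          apply hnd
          have : p ^ s ∣ (p ^ j) ^ s := by
            rw [← pow_mul, mul_comm]
            exact pow_dvd_pow p (Nat.le_mul_of_pos_right s hj0)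
          exact (this.trans hddvd).trans (Nat.gcd_dvd_left _ _)
    unfold genGcd
    calc _ = ({1} : Finset ℕ).sup id := congrArg (Finset.sup · id) (by convert hset)
      _ = 1 := by simp


/-- Values of the Cohen–Ramanujan sum at prime powers: for a prime `p` and positive
integers `r, s, n`, `c_{p^r}^s(n)` equals `p^{sr} - p^{s(r-1)}` if `p^{sr} ∣ n`,
equals `-p^{s(r-1)}` if `p^{s(r-1)} ∣ n` but `p^{sr} ∤ n`, and equals `0` if
`p^{s(r-1)} ∤ n`. -/
theorem cohenRamanujanSum_prime_pow (p : ℕ) (hp : p.Prime) (r s n : ℕ)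
    (hr : 0 < r) (hs : 0 < s) (hn : 0 < n) :
    (p ^ (s * r) ∣ n →
      cohenRamanujanSum s (p ^ r) n = (p : ℂ) ^ (s * r) - (p : ℂ) ^ (s * (r - 1))) ∧
    (p ^ (s * (r - 1)) ∣ n → ¬ p ^ (s * r) ∣ n →
      cohenRamanujanSum s (p ^ r) n = -(p : ℂ) ^ (s * (r - 1))) ∧
    (¬ p ^ (s * (r - 1)) ∣ n →
      cohenRamanujanSum s (p ^ r) n = 0) := by
  classical
  set M : ℕ := (p ^ r) ^ s with hM
  set M' : ℕ := p ^ (s * (r - 1)) with hM'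
  have hMeq : M = p ^ (s * r) := by rw [hM, ← pow_mul, mul_comm]
  have hsplit : M = p ^ s * M' := by
    rw [hMeq, hM', ← pow_add]
    congr 1
    have h1 : 1 + (r - 1) = r := by omega
    calc s * r = s * (1 + (r - 1)) := by rw [h1]
    _ = s + s * (r - 1) := by ring
  have hMpos : 0 < M := by
    rw [hMeq]; exact Nat.pow_pos hp.pos
  have hM'pos : 0 < M' := Nat.pow_pos hp.pos
  have hpspos : 0 < p ^ s := Nat.pow_pos hp.pos
  have key : cohenRamanujanSum s (p ^ r) n =
      (if p ^ (s * r) ∣ n then ((p : ℂ)) ^ (s * r) else 0) -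
      (if p ^ (s * (r - 1)) ∣ n then ((p : ℂ)) ^ (s * (r - 1)) else 0) := by
    unfold cohenRamanujanSum
    have step1 : ∀ h ∈ Finset.Icc 1 M,
        (if genGcd s h ((p ^ r) ^ s) = 1 then
          Complex.exp (2 * Real.pi * Complex.I * n * h / ((p ^ r : ℕ) : ℂ) ^ s) else 0) =
        Complex.exp (2 * Real.pi * Complex.I * n * h / ((M : ℕ) : ℂ)) -
        (if p ^ s ∣ h then Complex.exp (2 * Real.pi * Complex.I * n * h / ((M : ℕ) : ℂ)) else 0) := by
      intro h hh
      rw [Finset.mem_Icc] at hh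
      have hiff := genGcd_eq_one_iff p s r h hp (by omega) hs hr
      have hden : ((p ^ r : ℕ) : ℂ) ^ s = ((M : ℕ) : ℂ) := by
        rw [hM]; push_cast; ring
      simp only [hiff, hden]
      by_cases hc : p ^ s ∣ h <;> simp [hc]
    rw [Finset.sum_congr rfl step1, Finset.sum_sub_distrib]
    have first : ∑ h ∈ Finset.Icc 1 M, Complex.exp (2 * Real.pi * Complex.I * n * h / ((M:ℕ) : ℂ)) =
        if p ^ (s * r) ∣ n then ((p : ℂ)) ^ (s * r) else 0 := by
      rw [sum_exp_Icc M n hMpos, hMeq]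
      push_cast
      rfl
    have second : ∑ h ∈ Finset.Icc 1 M,
        (if p ^ s ∣ h then Complex.exp (2 * Real.pi * Complex.I * n * h / ((M:ℕ) : ℂ)) else 0) =
        if p ^ (s * (r - 1)) ∣ n then ((p : ℂ)) ^ (s * (r - 1)) else 0 := by
      rw [← Finset.sum_filter]
      have hbij : ∑ h ∈ (Finset.Icc 1 M).filter (fun h => p ^ s ∣ h),
          Complex.exp (2 * Real.pi * Complex.I * n * h / ((M:ℕ) : ℂ)) =
          ∑ k ∈ Finset.Icc 1 M', Complex.exp (2 * Real.pi * Complex.I * n * k / ((M':ℕ) : ℂ)) := by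
        apply Finset.sum_nbij' (i := fun h => h / p ^ s) (j := fun k => p ^ s * k)
        · intro a ha
          rw [Finset.mem_filter, Finset.mem_Icc] at ha
          obtain ⟨⟨ha1, ha2⟩, hdvd⟩ := ha
          rw [Finset.mem_Icc]
          constructor
          · exact Nat.one_le_div_iff hpspos |>.2 (Nat.le_of_dvd (by omega) hdvd)
          · rw [Nat.div_le_iff_le_mul_add_pred hpspos]
            calc a ≤ M := ha2
            _ = p ^ s * M' := hsplit
            _ ≤ p ^ s * M' + (p ^ s - 1) := Nat.le_add_right _ _
        · intro k hk
          rw [Finset.mem_Icc] at hk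
          rw [Finset.mem_filter, Finset.mem_Icc]
          refine ⟨⟨?_, ?_⟩, Dvd.intro k rfl⟩
          · exact Nat.mul_pos hpspos hk.1
          · rw [hsplit]
            exact Nat.mul_le_mul_left _ hk.2
        · intro a ha
          rw [Finset.mem_filter] at ha
          exact Nat.mul_div_cancel' ha.2
        · intro k hk
          exact Nat.mul_div_cancel_left k hpspos
        · intro a ha
          rw [Finset.mem_filter] at ha
          obtain ⟨k, rfl⟩ := ha.2
          congr 1
          rw [Nat.mul_div_cancel_left k hpspos]
          have hM0 : ((M : ℕ) : ℂ) ≠ 0 := Nat.cast_ne_zero.2 hMpos.ne'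
          have hM'0 : ((M' : ℕ) : ℂ) ≠ 0 := Nat.cast_ne_zero.2 hM'pos.ne'
          rw [hsplit]
          push_cast
          have hps0 : ((p:ℂ) ^ s) ≠ 0 :=
            pow_ne_zero s (Nat.cast_ne_zero.2 hp.pos.ne')
          field_simp
      rw [hbij, sum_exp_Icc M' n hM'pos]
      rw [hM']
      push_cast
      rfl
    rw [first, second]
  refine ⟨?_, ?_, ?_⟩
  · intro h1
    have h2 : p ^ (s * (r - 1)) ∣ n :=
      (pow_dvd_pow p (Nat.mul_le_mul_left s (by omega))).trans h1
    rw [key, if_pos h1, if_pos h2]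
  · intro h2 h1
    rw [key, if_neg h1, if_pos h2]
    ring
  · intro h2
    have h1 : ¬ p ^ (s * r) ∣ n := fun hc =>
      h2 ((pow_dvd_pow p (Nat.mul_le_mul_left s (by omega))).trans hc)
    rw [key, if_neg h1, if_neg h2]
    ring
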